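/- If gcd(n, p) = 1, then the number of monic irreducible polynomials of degree n over F_p with zero coefficient on x^{n-1} equals (1/(np)) * Σ_{d | n} μ(n/d) p^d. -/

import Mathlib

open Polynomial

lemma finite_poly_natDegree_le (F : Type*) [Field F] [Finite F] (d : ℕ) :
    {f : F[X] | f.natDegree ≤ d}.Finite := by
  have h : Set.InjOn (fun f : F[X] => fun i : Fin (d + 1) => f.coeff i)
      {f | f.natDegree ≤ d} := by
    intro f hf g hg hfg
    ext k
    by_cases hk : k ≤ d
    · exact congrFun hfg ⟨k, Nat.lt_succ_of_le hk⟩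
    · push_neg at hk
      rw [coeff_eq_zero_of_natDegree_lt (lt_of_le_of_lt hf hk),
        coeff_eq_zero_of_natDegree_lt (lt_of_le_of_lt hg hk)]
  exact Set.Finite.of_finite_image (Set.toFinite _) h

lemma irred_dvd (p : ℕ) [Fact p.Prime] {f : (ZMod p)[X]} (hm : f.Monic) (hi : Irreducible f) :
    f ∣ X ^ p ^ f.natDegree - X := by
  haveI : Fact (Irreducible f) := ⟨hi⟩
  have hf0 : f ≠ 0 := hm.ne_zero
  let pb := AdjoinRoot.powerBasis hf0
  haveI : FiniteDimensional (ZMod p) (AdjoinRoot f) := Module.Finite.of_basis pb.basis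
  haveI : Finite (AdjoinRoot f) := Module.finite_of_finite (ZMod p)
  haveI : Fintype (AdjoinRoot f) := Fintype.ofFinite _
  have hcard : Fintype.card (AdjoinRoot f) = p ^ f.natDegree := by
    rw [Module.card_eq_pow_finrank (K := ZMod p), ZMod.card, pb.finrank,
      AdjoinRoot.powerBasis_dim]
  have hroot : (AdjoinRoot.root f) ^ p ^ f.natDegree = AdjoinRoot.root f := by
    rw [← hcard]; exact FiniteField.pow_card _
  have hmp : minpoly (ZMod p) (AdjoinRoot.root f) = f := by
    rw [AdjoinRoot.minpoly_root hf0, hm.leadingCoeff, inv_one, map_one, mul_one]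
  have := minpoly.dvd (ZMod p) (AdjoinRoot.root f)
    (p := X ^ p ^ f.natDegree - X) (by simp [hroot])
  rwa [hmp] at this

lemma X_pow_dvd_X_pow (p : ℕ) [Fact p.Prime] {d n : ℕ} (hd : d ∣ n) :
    (X ^ p ^ d - X : (ZMod p)[X]) ∣ X ^ p ^ n - X := by
  obtain ⟨m, rfl⟩ := hd
  have hp1 : 1 ≤ p ^ d := Nat.one_le_pow _ _ (Fact.out : p.Prime).pos
  obtain ⟨t, ht⟩ : p ^ d - 1 ∣ p ^ (d * m) - 1 := by
    rw [pow_mul]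
    simpa using Nat.sub_dvd_pow_sub_pow (p ^ d) 1 m
  have key : (X ^ (p ^ d - 1) - 1 : (ZMod p)[X]) ∣ X ^ (p ^ (d * m) - 1) - 1 := by
    rw [ht, pow_mul]
    simpa using sub_dvd_pow_sub_pow ((X : (ZMod p)[X]) ^ (p ^ d - 1)) 1 t
  have e : ∀ k : ℕ, 1 ≤ k → (X ^ k - X : (ZMod p)[X]) = X * (X ^ (k - 1) - 1) := by
    intro k hk
    rw [mul_sub, mul_one, ← pow_succ', Nat.sub_add_cancel hk]
  rw [e _ hp1, e _ (Nat.one_le_pow _ _ (Fact.out : p.Prime).pos)]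
  exact mul_dvd_mul_left X key

lemma fiber_card (p n : ℕ) [Fact p.Prime] (hn : n ≠ 0) {f : (ZMod p)[X]}
    [Fintype (GaloisField p n)]
    (hm : f.Monic) (hi : Irreducible f) (hd : f.natDegree ∣ n) :
    (Finset.univ.filter fun α : GaloisField p n => minpoly (ZMod p) α = f).card
      = f.natDegree := by
  haveI : DecidableEq (GaloisField p n) := Classical.decEq _
  let K := GaloisField p n
  let φ := algebraMap (ZMod p) (GaloisField p n)
  have hcard : Fintype.card K = p ^ n := by
    rw [← Nat.card_eq_fintype_card, GaloisField.card p n hn]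
  have hbig : Splits ((X ^ p ^ n - X : (ZMod p)[X]).map φ) := by
    have := FiniteField.splits_X_pow_card_sub_X (K := K) (p := p)
    rwa [hcard] at this
  have hdvd : f ∣ X ^ p ^ n - X := (irred_dvd p hm hi).trans (X_pow_dvd_X_pow p hd)
  have hbigne : (X ^ p ^ n - X : (ZMod p)[X]) ≠ 0 :=
    FiniteField.X_pow_card_pow_sub_X_ne_zero _ hn (Fact.out : p.Prime).one_lt
  have hsplit : Splits (f.map φ) := hbig.of_dvd (Polynomial.map_ne_zero hbigne) (Polynomial.map_dvd φ hdvd)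
  have hsep : (f.map φ).Separable := (PerfectField.separable_of_irreducible hi).map
  have hmapne : f.map φ ≠ 0 := by
    simpa using (Polynomial.map_ne_zero_iff (algebraMap (ZMod p) K).injective).2 hm.ne_zero
  have hset : (Finset.univ.filter fun α : K => minpoly (ZMod p) α = f)
      = (f.map φ).roots.toFinset := by
    ext α
    simp only [Finset.mem_filter, Finset.mem_univ, true_and, Multiset.mem_toFinset,
      mem_roots hmapne, IsRoot, eval_map, ← aeval_def]
    constructor
    · rintro rfl; exact minpoly.aeval _ _
    · intro hroot
      exact (minpoly.eq_of_irreducible_of_monic hi hroot hm).symm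
  have h2 := congrArg Finset.card hset
  rw [Multiset.toFinset_card_of_nodup (nodup_roots hsep)] at h2
  rw [show f.natDegree = (f.map φ).natDegree from (natDegree_map φ).symm, hsplit.natDegree_eq_card_roots]
  exact h2

set_option maxHeartbeats 2000000 in
lemma gauss_count (p n : ℕ) [Fact p.Prime] (hn : n ≠ 0) :
    ∑ d ∈ n.divisors,
      d * Nat.card {f : (ZMod p)[X] // f.Monic ∧ f.natDegree = d ∧ Irreducible f}
      = p ^ n := by
  haveI : Fintype (GaloisField p n) := Fintype.ofFinite _
  have hnpos : 0 < n := Nat.pos_of_ne_zero hn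
  have hfin : {f : (ZMod p)[X] | f.Monic ∧ Irreducible f ∧ f.natDegree ∣ n}.Finite :=
    (finite_poly_natDegree_le (ZMod p) n).subset
      (fun f hf => Nat.le_of_dvd hnpos hf.2.2)
  let T : Finset ((ZMod p)[X]) := hfin.toFinset
  have hcard : Fintype.card (GaloisField p n) = p ^ n := by
    rw [← Nat.card_eq_fintype_card, GaloisField.card p n hn]
  have hfr : Module.finrank (ZMod p) (GaloisField p n) = n := GaloisField.finrank p hn
  have step1 : Fintype.card (GaloisField p n)
      = ∑ f ∈ T, (Finset.univ.filter
          fun α : GaloisField p n => minpoly (ZMod p) α = f).card := by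
    rw [← Finset.card_univ]
    apply Finset.card_eq_sum_card_fiberwise
    intro α _
    have hint : IsIntegral (ZMod p) α := IsIntegral.of_finite _ _
    show minpoly (ZMod p) α ∈ hfin.toFinset
    rw [Set.Finite.mem_toFinset, Set.mem_setOf_eq]
    exact ⟨minpoly.monic hint, minpoly.irreducible hint, (minpoly.degree_dvd hint).trans (dvd_of_eq hfr)⟩
  have step2 : ∑ f ∈ T, (Finset.univ.filter
        fun α : GaloisField p n => minpoly (ZMod p) α = f).card
      = ∑ f ∈ T, f.natDegree := by
    apply Finset.sum_congr rfl
    intro f hf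
    simp only [T, Set.Finite.mem_toFinset, Set.mem_setOf_eq] at hf
    exact fiber_card p n hn hf.1 hf.2.1 hf.2.2
  have step3 : ∑ f ∈ T, f.natDegree
      = ∑ d ∈ n.divisors, ∑ f ∈ T.filter (fun f => f.natDegree = d), f.natDegree := by
    refine (Finset.sum_fiberwise_of_maps_to ?_ _).symm
    intro f hf
    simp only [T, Set.Finite.mem_toFinset, Set.mem_setOf_eq] at hf
    exact Nat.mem_divisors.2 ⟨hf.2.2, hn⟩
  have step4 : ∀ d ∈ n.divisors,
      ∑ f ∈ T.filter (fun f => f.natDegree = d), f.natDegree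
        = d * Nat.card {f : (ZMod p)[X] // f.Monic ∧ f.natDegree = d ∧ Irreducible f} := by
    intro d hd
    obtain ⟨hdvd, -⟩ := Nat.mem_divisors.1 hd
    rw [Finset.sum_congr rfl (fun f hf => (Finset.mem_filter.1 hf).2), Finset.sum_const,
      smul_eq_mul, mul_comm]
    congr 1
    have hfin2 : {f : (ZMod p)[X] | f.Monic ∧ f.natDegree = d ∧ Irreducible f}.Finite :=
      hfin.subset (fun f hf => ⟨hf.1, hf.2.2, hf.2.1 ▸ hdvd⟩)
    have hTf : (T.filter fun f => f.natDegree = d) = hfin2.toFinset := by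
      ext f
      simp only [Finset.mem_filter, T, Set.Finite.mem_toFinset, Set.mem_setOf_eq]
      constructor
      · rintro ⟨⟨h1, h2, h3⟩, h4⟩; exact ⟨h1, h4, h2⟩
      · rintro ⟨h1, h2, h3⟩; exact ⟨⟨h1, h3, h2 ▸ hdvd⟩, h2⟩
    rw [hTf]
    exact (Nat.card_eq_card_finite_toFinset hfin2).symm
  calc ∑ d ∈ n.divisors,
      d * Nat.card {f : (ZMod p)[X] // f.Monic ∧ f.natDegree = d ∧ Irreducible f}
      = ∑ d ∈ n.divisors, ∑ f ∈ T.filter (fun f => f.natDegree = d), f.natDegree :=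
        Finset.sum_congr rfl (fun d hd => (step4 d hd).symm)
    _ = ∑ f ∈ T, f.natDegree := step3.symm
    _ = _ := step2.symm
    _ = Fintype.card (GaloisField p n) := step1.symm
    _ = p ^ n := hcard

lemma taylor_coeff_pred {F : Type*} [Field F] {f : F[X]} {n : ℕ} (hn : 0 < n)
    (hm : f.Monic) (hdeg : f.natDegree = n) (a : F) :
    (taylor a f).coeff (n - 1) = f.coeff (n - 1) + n * a := by
  rw [taylor_coeff]
  have hd : (hasseDeriv (n - 1) f).natDegree < 2 := by
    have := natDegree_hasseDeriv_le f (n - 1)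
    omega
  rw [eval_eq_sum_range' hd]
  rw [Finset.sum_range_succ, Finset.sum_range_one]
  rw [hasseDeriv_coeff, hasseDeriv_coeff]
  have h1 : 0 + (n - 1) = n - 1 := by omega
  have h2 : 1 + (n - 1) = n := by omega
  rw [h1, h2, Nat.choose_self]
  have h3 : n.choose (n - 1) = n := by
    have := Nat.choose_symm (Nat.one_le_iff_ne_zero.2 hn.ne') (n := n) (k := 1)
    simpa [Nat.choose_one_right] using this
  have h4 : f.coeff n = 1 := hdeg ▸ hm.coeff_natDegree
  rw [h3, h4]
  ring

lemma taylor_irreducible {F : Type*} [Field F] (a : F) {f : F[X]} (hi : Irreducible f) :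
    Irreducible (taylor a f) := by
  have h : taylor a f = algEquivAevalXAddC a f := by
    rw [taylor_apply, algEquivAevalXAddC_apply, comp_eq_aeval]
  rw [h]
  exact hi.map (algEquivAevalXAddC a).toMulEquiv

lemma translate_count (p n : ℕ) [Fact p.Prime] (hn : 0 < n) (hcop : Nat.gcd n p = 1) :
    Nat.card {f : (ZMod p)[X] // f.Monic ∧ f.natDegree = n ∧ Irreducible f}
      = p * Nat.card {f : (ZMod p)[X] //
          f.Monic ∧ f.natDegree = n ∧ Irreducible f ∧ f.coeff (n - 1) = 0} := by
  have hn0 : (n : ZMod p) ≠ 0 := by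
    rw [Ne, ZMod.natCast_eq_zero_iff]
    intro hdvd
    have h1 : p ∣ Nat.gcd n p := Nat.dvd_gcd hdvd dvd_rfl
    rw [hcop, Nat.dvd_one] at h1
    exact (Fact.out : p.Prime).one_lt.ne' h1
  have key : ∀ (a : ZMod p) (f : (ZMod p)[X]), f.Monic → f.natDegree = n → Irreducible f →
      (taylor a f).Monic ∧ (taylor a f).natDegree = n ∧ Irreducible (taylor a f) := by
    intro a f h1 h2 h3
    refine ⟨?_, ?_, taylor_irreducible a h3⟩
    · rw [taylor_apply]; exact h1.comp_X_add_C a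
    · rw [natDegree_taylor, h2]
  let Φ : ZMod p × {f : (ZMod p)[X] //
        f.Monic ∧ f.natDegree = n ∧ Irreducible f ∧ f.coeff (n - 1) = 0}
      → {f : (ZMod p)[X] // f.Monic ∧ f.natDegree = n ∧ Irreducible f} :=
    fun x => ⟨taylor x.1 x.2.1, key x.1 x.2.1 x.2.2.1 x.2.2.2.1 x.2.2.2.2.1⟩
  have hbij : Function.Bijective Φ := by
    constructor
    · rintro ⟨a, f, hf1, hf2, hf3, hf4⟩ ⟨b, g, hg1, hg2, hg3, hg4⟩ h
      simp only [Φ, Subtype.mk.injEq] at h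
      have hcoeff := congrArg (fun q => q.coeff (n - 1)) h
      rw [taylor_coeff_pred hn hf1 hf2, taylor_coeff_pred hn hg1 hg2, hf4, hg4,
        zero_add, zero_add] at hcoeff
      have hab : a = b := mul_left_cancel₀ hn0 hcoeff
      subst hab
      have hfg : f = g := by
        have h2 := congrArg (taylor (-a)) h
        rwa [taylor_taylor, taylor_taylor, neg_add_cancel, taylor_zero, taylor_zero] at h2
      simp [hfg]
    · rintro ⟨g, hg1, hg2, hg3⟩
      refine ⟨⟨g.coeff (n - 1) * (n : ZMod p)⁻¹,
        ⟨taylor (-(g.coeff (n - 1) * (n : ZMod p)⁻¹)) g, ?_, ?_, ?_, ?_⟩⟩, ?_⟩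
      · rw [taylor_apply]; exact hg1.comp_X_add_C _
      · rw [natDegree_taylor, hg2]
      · exact taylor_irreducible _ hg3
      · rw [taylor_coeff_pred hn hg1 hg2, mul_neg, ← mul_assoc, mul_comm (n : ZMod p),
          mul_assoc, mul_inv_cancel₀ hn0, mul_one, add_neg_cancel]
      · simp only [Φ]
        apply Subtype.ext
        simp only
        rw [taylor_taylor, add_neg_cancel, taylor_zero]
  have hc := Nat.card_eq_of_bijective Φ hbij
  rw [Nat.card_prod, Nat.card_zmod] at hc
  exact hc.symm

/-- If `gcd(n, p) = 1`, the number of monic irreducible polynomials of degree `n`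
over `F_p` with zero coefficient on `x^(n-1)` equals `(1/(n p)) * Σ_{d ∣ n} μ(n/d) p^d`.
Stated multiplied through by `n * p`. -/
theorem stmt_1 (p n : ℕ) (hp : p.Prime) (hn : 0 < n) (hcop : Nat.gcd n p = 1) :
    (n : ℤ) * (p : ℤ) * Nat.card {f : Polynomial (ZMod p) //
        f.Monic ∧ f.natDegree = n ∧ Irreducible f ∧ f.coeff (n - 1) = 0} =
      ∑ d ∈ n.divisors, ArithmeticFunction.moebius (n / d) * (p : ℤ) ^ d := by
  haveI : Fact p.Prime := ⟨hp⟩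
  have hinv := (ArithmeticFunction.sum_eq_iff_sum_smul_moebius_eq (R := ℤ)
      (f := fun d => (d : ℤ) *
        Nat.card {f : (ZMod p)[X] // f.Monic ∧ f.natDegree = d ∧ Irreducible f})
      (g := fun m => (p : ℤ) ^ m)).1 ?_ n hn
  · have hrhs : ∑ x ∈ n.divisorsAntidiagonal,
        (ArithmeticFunction.moebius x.1 : ℤ) • (p : ℤ) ^ x.2
        = ∑ d ∈ n.divisors, ArithmeticFunction.moebius (n / d) * (p : ℤ) ^ d := by
      rw [← Nat.sum_divisorsAntidiagonal'
        (f := fun a b => (ArithmeticFunction.moebius a : ℤ) * (p : ℤ) ^ b)]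
      simp [zsmul_eq_mul]
    rw [hrhs] at hinv
    rw [hinv, translate_count p n hn hcop]
    push_cast
    ring
  · intro m hm
    have := gauss_count p m hm.ne'
    have hcast := congrArg (fun k : ℕ => (k : ℤ)) this
    push_cast at hcast
    simpa using hcast
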